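/- arXiv:2505.11816 — 2 statements merged into one kernel-verified Lean document; each statement's English description precedes it below -/
import Mathlib

section
/- (Frequent Directions invariant, single step) Let S ∈ ℝ^{m×r} and Q ∈ ℝ^{m×r}, and let U' Σ' V'ᵀ be the SVD of the concatenated matrix [S, Q] ∈ ℝ^{m×2r}. Define σ = (σ'_r)², the square of the r-th singular value of [S, Q], and S⁺ = U'[:,:r] · sqrt(Σ'[:r]² − σ I_r). Then the matrix S Sᵀ + Q Qᵀ − S⁺ (S⁺)ᵀ is positive semidefinite, and ‖S Sᵀ + Q Qᵀ − S⁺ (S⁺)ᵀ‖₂ ≤ σ. -/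
open Matrix

private lemma dot_helper {m : ℕ} (A : Matrix (Fin m) (Fin m) ℝ) (x y : Fin m → ℝ) :
    x ⬝ᵥ (A *ᵥ y) = (Aᵀ *ᵥ x) ⬝ᵥ y := by
  rw [dotProduct_mulVec, mulVec_transpose]

/-- Spectral norm of a real matrix. -/
noncomputable def spec {m n : ℕ} (A : Matrix (Fin m) (Fin n) ℝ) : ℝ :=
  ‖LinearMap.toContinuousLinearMap (Matrix.toEuclideanLin A)‖

/-- One shrinkage step of Frequent Directions.  Let `U'` be the left singular
vectors of `[S, Q]`, with singular values `s 0 ≥ s 1 ≥ …` (so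
`[S,Q] [S,Q]ᵀ = U' diag(s i ^ 2) U'ᵀ`), let `σ = s (r-1) ^ 2` be the square of
the `r`-th singular value, and `S⁺ = U'[:,:r] · sqrt(diag(s j ^ 2) − σ I)`.
Then `S Sᵀ + Q Qᵀ − S⁺ (S⁺)ᵀ` is positive semidefinite and its spectral norm
is at most `σ`. -/
theorem fd_single_step
    (m r : ℕ) (hr : 0 < r) (hrm : r ≤ m)
    (S Q : Matrix (Fin m) (Fin r) ℝ)
    (U' : Matrix (Fin m) (Fin m) ℝ) (s : ℕ → ℝ)
    (hU' : U'ᵀ * U' = 1)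
    (hdesc : ∀ i j : ℕ, i ≤ j → s j ≤ s i)
    (hnn : ∀ i : ℕ, 0 ≤ s i)
    (hB : Matrix.fromCols S Q * (Matrix.fromCols S Q)ᵀ
        = U' * Matrix.diagonal (fun i : Fin m => (s i) ^ 2) * U'ᵀ)
    (Splus : Matrix (Fin m) (Fin r) ℝ)
    (hSplus : Splus = Matrix.of fun (i : Fin m) (j : Fin r) =>
        U' i ⟨j, lt_of_lt_of_le j.isLt hrm⟩
          * Real.sqrt ((s j) ^ 2 - (s (r - 1)) ^ 2)) :
    (S * Sᵀ + Q * Qᵀ - Splus * Splusᵀ).PosSemidef ∧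
      spec (S * Sᵀ + Q * Qᵀ - Splus * Splusᵀ) ≤ (s (r - 1)) ^ 2 := by
  set σ : ℝ := s (r - 1) ^ 2 with hσdef
  have hσ0 : 0 ≤ σ := sq_nonneg _
  -- for j < r, σ ≤ s j ^ 2
  have hle : ∀ j : ℕ, j < r → σ ≤ s j ^ 2 := by
    intro j hj
    have : s (r - 1) ≤ s j := hdesc j (r - 1) (by omega)
    exact pow_le_pow_left₀ (hnn _) this 2
  set f : Fin m → ℝ := fun i => if (i : ℕ) < r then s i ^ 2 - σ else 0 with hfdef
  set e : Fin m → ℝ := fun i => if (i : ℕ) < r then σ else s i ^ 2 with hedef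
  have h1 : S * Sᵀ + Q * Qᵀ
      = U' * Matrix.diagonal (fun i : Fin m => (s i) ^ 2) * U'ᵀ := by
    rw [← hB, transpose_fromCols, fromCols_mul_fromRows]
  have h2 : Splus * Splusᵀ = U' * Matrix.diagonal f * U'ᵀ := by
    subst hSplus
    ext i k
    simp only [mul_apply, transpose_apply, diagonal_apply, Matrix.of_apply]
    -- RHS inner sum collapses
    have hrhs : ∀ l : Fin m,
        (∑ j : Fin m, U' i j * (if j = l then f j else 0)) * U' k l
          = U' i l * f l * U' k l := by
      intro l
      congr 1
      rw [Finset.sum_eq_single l]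
      · simp
      · intro b _ hb; simp [hb]
      · intro h; exact absurd (Finset.mem_univ l) h
    rw [Finset.sum_congr rfl fun l _ => hrhs l]
    -- now equate sum over Fin r with sum over Fin m
    refine Finset.sum_of_injOn (Fin.castLE hrm) ?_ ?_ ?_ ?_
    · intro a _ b _ hab
      exact Fin.castLE_injective hrm hab
    · intro a _; exact Finset.mem_coe.mpr (Finset.mem_univ _)
    · intro l _ hl
      have hlr : ¬ ((l : ℕ) < r) := by
        intro hc
        exact hl ⟨⟨(l : ℕ), hc⟩, Finset.mem_coe.mpr (Finset.mem_univ _), by ext; simp⟩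
      simp [hfdef, hlr]
    · intro j _
      have hjr : ((Fin.castLE hrm j : Fin m) : ℕ) < r := by simp [j.isLt]
      have hnonneg : 0 ≤ s (j : ℕ) ^ 2 - σ := sub_nonneg.mpr (hle _ j.isLt)
      have hsqrt : Real.sqrt (s (j : ℕ) ^ 2 - σ) * Real.sqrt (s (j : ℕ) ^ 2 - σ)
          = s (j : ℕ) ^ 2 - σ := Real.mul_self_sqrt hnonneg
      have hcast : (⟨(j : ℕ), lt_of_lt_of_le j.isLt hrm⟩ : Fin m) = Fin.castLE hrm j := rfl
      have hval : f (Fin.castLE hrm j) = s (j : ℕ) ^ 2 - σ := by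
        simp [hfdef, hjr]
      rw [hcast, hval]
      calc U' i (Fin.castLE hrm j) * Real.sqrt (s (j : ℕ) ^ 2 - σ)
            * (U' k (Fin.castLE hrm j) * Real.sqrt (s (j : ℕ) ^ 2 - σ))
          = U' i (Fin.castLE hrm j) * U' k (Fin.castLE hrm j)
            * (Real.sqrt (s (j : ℕ) ^ 2 - σ) * Real.sqrt (s (j : ℕ) ^ 2 - σ)) := by ring
        _ = U' i (Fin.castLE hrm j) * (s (j : ℕ) ^ 2 - σ) * U' k (Fin.castLE hrm j) := by
            rw [hsqrt]; ring
  have hM : S * Sᵀ + Q * Qᵀ - Splus * Splusᵀ = U' * Matrix.diagonal e * U'ᵀ := by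
    rw [h1, h2, ← Matrix.sub_mul, ← Matrix.mul_sub, Matrix.diagonal_sub]
    have hfe : (fun i : Fin m => s (i : ℕ) ^ 2 - f i) = e := by
      funext i
      by_cases h : (i : ℕ) < r <;> simp [hedef, hfdef, h]
    rw [hfe]
  have he0 : ∀ i : Fin m, 0 ≤ e i := by
    intro i; by_cases h : (i : ℕ) < r <;> simp [hedef, h, hσ0, sq_nonneg]
  have heσ : ∀ i : Fin m, e i ≤ σ := by
    intro i
    by_cases h : (i : ℕ) < r
    · simp [hedef, h]
    · have : s (i : ℕ) ≤ s (r - 1) := hdesc (r - 1) (i : ℕ) (by omega)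
      simp only [hedef, h, if_neg, if_false]
      exact pow_le_pow_left₀ (hnn _) this 2
  have hUU : U' * U'ᵀ = 1 := mul_eq_one_comm.mp hU'
  have hpsd : (S * Sᵀ + Q * Qᵀ - Splus * Splusᵀ).PosSemidef := by
    rw [hM]
    have : U' * Matrix.diagonal e * U'ᵀ = U' * Matrix.diagonal e * U'ᴴ := by
      simp [conjTranspose_eq_transpose_of_trivial]
    rw [this]
    exact Matrix.PosSemidef.mul_mul_conjTranspose_same
      (Matrix.posSemidef_diagonal_iff.mpr he0) U'
  refine ⟨hpsd, ?_⟩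
  set M := S * Sᵀ + Q * Qᵀ - Splus * Splusᵀ with hMdef
  -- square of M
  have hM2 : M * M = U' * Matrix.diagonal (fun i => e i ^ 2) * U'ᵀ := by
    rw [hM]
    calc U' * Matrix.diagonal e * U'ᵀ * (U' * Matrix.diagonal e * U'ᵀ)
        = U' * Matrix.diagonal e * (U'ᵀ * U') * Matrix.diagonal e * U'ᵀ := by
          simp only [Matrix.mul_assoc]
      _ = U' * (Matrix.diagonal e * Matrix.diagonal e) * U'ᵀ := by
          rw [hU']; simp only [Matrix.mul_one, Matrix.mul_assoc]
      _ = U' * Matrix.diagonal (fun i => e i ^ 2) * U'ᵀ := by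
          rw [Matrix.diagonal_mul_diagonal]
          congr 1; congr 1; funext i; ring
  -- σ^2 • 1 - M * M is PSD
  have hgap : ((σ ^ 2) • (1 : Matrix (Fin m) (Fin m) ℝ) - M * M).PosSemidef := by
    have heq : (σ ^ 2) • (1 : Matrix (Fin m) (Fin m) ℝ) - M * M
        = U' * Matrix.diagonal (fun i => σ ^ 2 - e i ^ 2) * U'ᵀ := by
      rw [hM2]
      have h1' : (σ ^ 2) • (1 : Matrix (Fin m) (Fin m) ℝ)
          = U' * ((σ ^ 2) • (1 : Matrix (Fin m) (Fin m) ℝ)) * U'ᵀ := by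
        rw [Matrix.mul_smul, Matrix.mul_one, Matrix.smul_mul, hUU]
      rw [h1', ← Matrix.sub_mul, ← Matrix.mul_sub]
      congr 2
      rw [← Matrix.diagonal_one, ← Matrix.diagonal_smul, Matrix.diagonal_sub]
      congr 1; funext i; simp
    rw [heq]
    have : U' * Matrix.diagonal (fun i => σ ^ 2 - e i ^ 2) * U'ᵀ
        = U' * Matrix.diagonal (fun i => σ ^ 2 - e i ^ 2) * U'ᴴ := by
      simp [conjTranspose_eq_transpose_of_trivial]
    rw [this]
    refine Matrix.PosSemidef.mul_mul_conjTranspose_same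
      (Matrix.posSemidef_diagonal_iff.mpr ?_) U'
    intro i
    have := heσ i
    have := he0 i
    nlinarith
  -- operator norm bound
  rw [spec]
  refine ContinuousLinearMap.opNorm_le_bound _ hσ0 ?_
  intro x
  set v : Fin m → ℝ := (WithLp.equiv 2 (Fin m → ℝ)) x with hv
  have hvx : ∀ i, v i = x i := fun i => rfl
  have hkey : (M *ᵥ v) ⬝ᵥ (M *ᵥ v) ≤ σ ^ 2 * (v ⬝ᵥ v) := by
    have hMsym : Mᵀ = M := by
      rw [hM]
      simp [Matrix.transpose_mul, Matrix.diagonal_transpose, Matrix.mul_assoc]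
    have e1 : (M *ᵥ v) ⬝ᵥ (M *ᵥ v) = v ⬝ᵥ ((M * M) *ᵥ v) := by
      rw [dot_helper M (M *ᵥ v) v, hMsym, mulVec_mulVec, dotProduct_comm]
    have hq := hgap.dotProduct_mulVec_nonneg v
    have hstar : star v = v := rfl
    rw [hstar] at hq
    have e2 : ((σ ^ 2) • (1 : Matrix (Fin m) (Fin m) ℝ) - M * M) *ᵥ v
        = (σ ^ 2) • v - (M * M) *ᵥ v := by
      rw [Matrix.sub_mulVec, Matrix.smul_mulVec, Matrix.one_mulVec]
    rw [e2, dotProduct_sub, dotProduct_smul] at hq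
    have : v ⬝ᵥ ((M * M) *ᵥ v) ≤ σ ^ 2 * (v ⬝ᵥ v) := by
      have := hq
      simp only [smul_eq_mul] at this
      linarith
    linarith [e1 ▸ this]
  have hnormMx : ‖(Matrix.toEuclideanLin M) x‖ = Real.sqrt ((M *ᵥ v) ⬝ᵥ (M *ᵥ v)) := by
    rw [Matrix.toEuclideanLin_apply, EuclideanSpace.norm_eq]
    congr 1
    rw [dotProduct]
    refine Finset.sum_congr rfl fun i _ => ?_
    rw [PiLp.toLp_apply]
    rw [Real.norm_eq_abs, sq_abs]
    rw [sq]; rfl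
  have hnormx : ‖x‖ = Real.sqrt (v ⬝ᵥ v) := by
    rw [EuclideanSpace.norm_eq]
    congr 1
    rw [dotProduct]
    refine Finset.sum_congr rfl fun i _ => ?_
    rw [Real.norm_eq_abs, sq_abs, hvx]
    ring
  rw [LinearMap.coe_toContinuousLinearMap', hnormMx, hnormx]
  calc Real.sqrt ((M *ᵥ v) ⬝ᵥ (M *ᵥ v)) ≤ Real.sqrt (σ ^ 2 * (v ⬝ᵥ v)) :=
        Real.sqrt_le_sqrt hkey
    _ = σ * Real.sqrt (v ⬝ᵥ v) := by
        rw [Real.sqrt_mul (sq_nonneg σ), Real.sqrt_sq hσ0]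
end

section
/- Suppose S, Q ∈ ℝ^{m×r} and let S⁺ be the FD-updated sketch with shrinkage σ = σ_r([S,Q])². Then S⁺ (S⁺)ᵀ ⪯ S Sᵀ + Q Qᵀ (the updated sketch covariance never overestimates the accumulated covariance), and consequently, by induction over a stream Q₁,…,Q_T, the final FD sketch satisfies S_T S_Tᵀ ⪯ Σ_{t=1}^T Q_t Q_tᵀ in the Loewner order. -/
open Matrix

lemma fd_step_psd (m r : ℕ) (hr : 0 < r) (hrm : r ≤ m)
    (A Q Snew : Matrix (Fin m) (Fin r) ℝ) (U : Matrix (Fin m) (Fin m) ℝ) (s : ℕ → ℝ)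
    (hdesc : ∀ i j : ℕ, i ≤ j → s j ≤ s i)
    (hnn : ∀ i : ℕ, 0 ≤ s i)
    (hB : Matrix.fromCols A Q * (Matrix.fromCols A Q)ᵀ
        = U * Matrix.diagonal (fun i : Fin m => (s i) ^ 2) * Uᵀ)
    (hSdef : Snew = Matrix.of fun (i : Fin m) (j : Fin r) =>
        U i ⟨j, lt_of_lt_of_le j.isLt hrm⟩
          * Real.sqrt ((s j) ^ 2 - (s (r - 1)) ^ 2)) :
    (A * Aᵀ + Q * Qᵀ - Snew * Snewᵀ).PosSemidef := by
  have hsum : A * Aᵀ + Q * Qᵀ = U * Matrix.diagonal (fun i : Fin m => (s i) ^ 2) * Uᵀ := by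
    rw [← hB, transpose_fromCols, fromCols_mul_fromRows]
  -- c j ≥ 0 for j < r
  have hc : ∀ j : ℕ, j < r → 0 ≤ (s j) ^ 2 - (s (r - 1)) ^ 2 := by
    intro j hj
    have : s (r - 1) ≤ s j := hdesc j (r - 1) (by omega)
    have := pow_le_pow_left₀ (hnn (r - 1)) this 2
    linarith
  set d : Fin m → ℝ := fun i => if h : (i : ℕ) < r then (s i) ^ 2 - (s (r - 1)) ^ 2 else 0
    with hd
  have hSS : Snew * Snewᵀ = U * Matrix.diagonal d * Uᵀ := by
    ext i k
    have hL : (Snew * Snewᵀ) i k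
        = ∑ j : Fin r, U i ⟨j, lt_of_lt_of_le j.isLt hrm⟩ * U k ⟨j, lt_of_lt_of_le j.isLt hrm⟩
            * ((s j) ^ 2 - (s (r - 1)) ^ 2) := by
      rw [hSdef]
      simp only [mul_apply, transpose_apply, of_apply]
      refine Finset.sum_congr rfl fun j _ => ?_
      have := Real.mul_self_sqrt (hc j j.isLt)
      ring_nf
      rw [Real.sq_sqrt (hc j j.isLt)]
      ring
    have hR : (U * Matrix.diagonal d * Uᵀ) i k
        = ∑ j : Fin m, U i j * U k j * d j := by
      simp only [mul_apply, transpose_apply, diagonal_apply, mul_ite, mul_zero,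
        Finset.sum_ite_eq', Finset.mem_univ, if_true]
      refine Finset.sum_congr rfl fun j _ => ?_
      ring
    rw [hL, hR]
    -- convert to range sums
    have e1 : ∑ j : Fin r, U i ⟨j, lt_of_lt_of_le j.isLt hrm⟩ * U k ⟨j, lt_of_lt_of_le j.isLt hrm⟩
            * ((s j) ^ 2 - (s (r - 1)) ^ 2)
        = ∑ j ∈ Finset.range r, (fun j : ℕ => if h : j < m then
            U i ⟨j, h⟩ * U k ⟨j, h⟩ * d ⟨j, h⟩ else 0) j := by
      rw [← Fin.sum_univ_eq_sum_range]
      refine Finset.sum_congr rfl fun j _ => ?_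
      have hjm : (j : ℕ) < m := lt_of_lt_of_le j.isLt hrm
      rw [dif_pos hjm]
      simp [hd, j.isLt]
    have e2 : ∑ j : Fin m, U i j * U k j * d j
        = ∑ j ∈ Finset.range m, (fun j : ℕ => if h : j < m then
            U i ⟨j, h⟩ * U k ⟨j, h⟩ * d ⟨j, h⟩ else 0) j := by
      rw [← Fin.sum_univ_eq_sum_range]
      refine Finset.sum_congr rfl fun j _ => ?_
      rw [dif_pos j.isLt]
    rw [e1, e2]
    apply Finset.sum_subset (Finset.range_subset_range.2 hrm)
    intro j hjm hjr
    simp only [Finset.mem_range] at hjm hjr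
    rw [dif_pos hjm]
    have : d ⟨j, hjm⟩ = 0 := by simp [hd, hjr]
    simp [this]
  rw [hsum, hSS, ← Matrix.sub_mul, ← Matrix.mul_sub, Matrix.diagonal_sub]
  have hd2 : ∀ i : Fin m, 0 ≤ (s i) ^ 2 - d i := by
    intro i
    by_cases h : (i : ℕ) < r
    · simp only [hd, dif_pos h]
      have := sq_nonneg (s (r - 1))
      linarith [sq_nonneg (s (r - 1))]
    · simp only [hd, dif_neg h, sub_zero]
      positivity
  have hpsd := (Matrix.posSemidef_diagonal_iff
    (d := fun i : Fin m => (s i) ^ 2 - d i)).2 hd2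
  have h2 := hpsd.mul_mul_conjTranspose_same U
  have hct : Uᴴ = Uᵀ := by ext a b; simp [conjTranspose_apply]
  rwa [hct] at h2

/-- FD shrinkage invariant.  With the Frequent Directions update
`S 1 = Q 1` and for `t ≥ 2`:  `[S (t-1), Q t] = U' Σ' V'ᵀ` (encoded via
`[S (t-1), Q t][S (t-1), Q t]ᵀ = U'_t diag((s t i)²) (U'_t)ᵀ` with descending
nonnegative `s t`), `σ_t = (s t (r-1))²`, and
`S t = U'_t[:,:r] sqrt(diag((s t j)²) − σ_t I)`:
each step never overestimates, `S t (S t)ᵀ ⪯ S (t-1) (S (t-1))ᵀ + Q t (Q t)ᵀ`,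
and consequently the final sketch satisfies
`S T (S T)ᵀ ⪯ Σ_{t=1}^T Q t (Q t)ᵀ` in the Loewner order. -/
theorem fd_loewner_underestimate
    (m r T : ℕ) (hr : 0 < r) (hrm : r ≤ m) (hT : 1 ≤ T)
    (S Q : ℕ → Matrix (Fin m) (Fin r) ℝ)
    (U : ℕ → Matrix (Fin m) (Fin m) ℝ) (s : ℕ → ℕ → ℝ)
    (hS1 : S 1 = Q 1)
    (hU : ∀ t, 2 ≤ t → t ≤ T → (U t)ᵀ * U t = 1)
    (hdesc : ∀ t, 2 ≤ t → t ≤ T → ∀ i j : ℕ, i ≤ j → s t j ≤ s t i)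
    (hnn : ∀ t, 2 ≤ t → t ≤ T → ∀ i : ℕ, 0 ≤ s t i)
    (hB : ∀ t, 2 ≤ t → t ≤ T →
      Matrix.fromCols (S (t - 1)) (Q t)
          * (Matrix.fromCols (S (t - 1)) (Q t))ᵀ
        = U t * Matrix.diagonal (fun i : Fin m => (s t i) ^ 2) * (U t)ᵀ)
    (hSdef : ∀ t, 2 ≤ t → t ≤ T →
      S t = Matrix.of fun (i : Fin m) (j : Fin r) =>
        U t i ⟨j, lt_of_lt_of_le j.isLt hrm⟩
          * Real.sqrt ((s t j) ^ 2 - (s t (r - 1)) ^ 2)) :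
    (∀ t, 2 ≤ t → t ≤ T →
      (S (t - 1) * (S (t - 1))ᵀ + Q t * (Q t)ᵀ - S t * (S t)ᵀ).PosSemidef) ∧
    ((∑ t ∈ Finset.Icc 1 T, Q t * (Q t)ᵀ) - S T * (S T)ᵀ).PosSemidef := by
  have step : ∀ t, 2 ≤ t → t ≤ T →
      (S (t - 1) * (S (t - 1))ᵀ + Q t * (Q t)ᵀ - S t * (S t)ᵀ).PosSemidef := by
    intro t h2 hle
    exact fd_step_psd m r hr hrm (S (t - 1)) (Q t) (S t) (U t) (s t)
      (hdesc t h2 hle) (hnn t h2 hle) (hB t h2 hle) (hSdef t h2 hle)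
  refine ⟨step, ?_⟩
  have key : ∀ t, 1 ≤ t → t ≤ T →
      ((∑ u ∈ Finset.Icc 1 t, Q u * (Q u)ᵀ) - S t * (S t)ᵀ).PosSemidef := by
    intro t ht1
    induction t, ht1 using Nat.le_induction with
    | base =>
      intro _
      simp only [Finset.Icc_self, Finset.sum_singleton, hS1, sub_self]
      exact Matrix.PosSemidef.zero
    | succ n hn ih =>
      intro hle
      have ihp := ih (by omega)
      have hst := step (n + 1) (by omega) hle
      have hn1 : n + 1 - 1 = n := by omega
      rw [hn1] at hst
      have hsplit : (∑ u ∈ Finset.Icc 1 (n + 1), Q u * (Q u)ᵀ)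
          = (∑ u ∈ Finset.Icc 1 n, Q u * (Q u)ᵀ) + Q (n + 1) * (Q (n + 1))ᵀ := by
        rw [← Finset.sum_Icc_succ_top (by omega : 1 ≤ n + 1)]
      have heq : (∑ u ∈ Finset.Icc 1 (n + 1), Q u * (Q u)ᵀ) - S (n + 1) * (S (n + 1))ᵀ
          = ((∑ u ∈ Finset.Icc 1 n, Q u * (Q u)ᵀ) - S n * (S n)ᵀ)
            + (S n * (S n)ᵀ + Q (n + 1) * (Q (n + 1))ᵀ - S (n + 1) * (S (n + 1))ᵀ) := by
        rw [hsplit]; abel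
      rw [heq]
      exact ihp.add hst
  exact key T hT le_rfl
end
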